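/- Over {a<b<c}, suppose w = b^α a b^β c b^γ a b^δ c b^ν and w' = b^{α'} a b^{β'} c b^{γ'} a b^{δ'} c b^{ν'} (with β,γ,δ,β',γ',δ' ≥ 1 and α,ν,α',ν' ≥ 0) are distinct and M-equivalent. Then γ = γ', α + ν = α' + ν', β' − β = δ − δ', and α' − α = ν − ν'. Moreover the Hamming distance between w and w' is 7 or 8. -/
import Mathlib


open List

/-- Number of occurrences of `v` as a scattered subsequence of `w`. -/
def scount {α : Type*} [DecidableEq α] (w v : List α) : ℕ := w.sublists.count v

/-- The ternary ordered alphabet {a < b < c}. -/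
inductive ABC | a | b | c
deriving DecidableEq

open ABC

/-- M-equivalence over the ordered alphabet {a < b < c}. -/
def MEq3 (w w' : List ABC) : Prop :=
  scount w [a] = scount w' [a] ∧ scount w [b] = scount w' [b] ∧
  scount w [c] = scount w' [c] ∧ scount w [a, b] = scount w' [a, b] ∧
  scount w [b, c] = scount w' [b, c] ∧ scount w [a, b, c] = scount w' [a, b, c]

/-- Projection onto {a, c}: erase all b's. -/
def projAC (w : List ABC) : List ABC := w.filter (· ≠ b)

abbrev A (k : ℕ) : List ABC := List.replicate k a
abbrev B (k : ℕ) : List ABC := List.replicate k b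
abbrev C (k : ℕ) : List ABC := List.replicate k c

/-- Hamming distance between two (equal-length) words. -/
def dH {α : Type*} [DecidableEq α] (w w' : List α) : ℕ :=
  (w.zip w').countP fun p => p.1 ≠ p.2

section scountMachinery
variable {α : Type*} [DecidableEq α]

lemma aux_count (v : List α) (x : α) (L : List (List α)) :
    count v (L.flatMap fun s => [s, x :: s]) =
      count v L + count v (L.map (x :: ·)) := by
  induction L with
  | nil => rfl
  | cons s L ih =>
      simp only [flatMap_cons, count_append, ih, map_cons, count_cons, count_nil]
      omega

lemma count_map_cons (y : α) (q : List α) (L : List (List α)) :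
    count (y :: q) (L.map (y :: ·)) = count q L := by
  induction L with
  | nil => rfl
  | cons s L ih => simp [count_cons, ih]

lemma scount_cons (x : α) (w : List α) (y : α) (q : List α) :
    scount (x :: w) (y :: q) = scount w (y :: q) + if y = x then scount w q else 0 := by
  simp only [scount, sublists_cons, bind_eq_flatMap, aux_count]
  congr 1
  by_cases h : y = x
  · subst h
    rw [if_pos rfl, count_map_cons]
  · rw [if_neg h, count_eq_zero]
    simp only [mem_map, not_exists]
    rintro s ⟨-, hs⟩
    injection hs with h1 h2
    exact h h1.symm

lemma scount_cons_nil (x : α) (w : List α) : scount (x :: w) [] = scount w [] := by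
  simp only [scount, sublists_cons, bind_eq_flatMap, aux_count]
  have : count ([] : List α) ((sublists w).map (x :: ·)) = 0 := count_eq_zero.2 (by simp)
  omega

lemma scount_nil (w : List α) : scount w [] = 1 := by
  induction w with
  | nil => rfl
  | cons x w ih => rw [scount_cons_nil, ih]

lemma scount_nil_word (p : List α) (hp : p ≠ []) : scount [] p = 0 := by
  cases p with
  | nil => exact absurd rfl hp
  | cons y q => rfl

lemma scount_append1 (u v : List α) (x : α) :
    scount (u ++ v) [x] = scount u [x] + scount v [x] := by
  induction u with
  | nil => rw [nil_append, scount_nil_word _ (by simp)]; omega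
  | cons z u ih =>
      rw [cons_append, scount_cons, scount_cons, ih, scount_nil, scount_nil]
      by_cases h : x = z <;> simp [h] <;> omega

lemma scount_append2 (u v : List α) (x y : α) :
    scount (u ++ v) [x, y] =
      scount u [x, y] + scount u [x] * scount v [y] + scount v [x, y] := by
  induction u with
  | nil =>
      rw [nil_append, scount_nil_word _ (by simp), scount_nil_word _ (by simp)]
      simp
  | cons z u ih =>
      rw [cons_append, scount_cons, ih]
      simp only [scount_append1, scount_cons, scount_nil]
      by_cases h : x = z <;> simp [h] <;> ring

lemma scount_append3 (u v : List α) (x y z : α) :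
    scount (u ++ v) [x, y, z] =
      scount u [x, y, z] + scount u [x, y] * scount v [z] +
        scount u [x] * scount v [y, z] + scount v [x, y, z] := by
  induction u with
  | nil =>
      rw [nil_append, scount_nil_word _ (by simp), scount_nil_word _ (by simp),
        scount_nil_word _ (by simp)]
      simp
  | cons t u ih =>
      rw [cons_append, scount_cons, ih]
      simp only [scount_append2, scount_append1, scount_cons, scount_nil]
      by_cases h : x = t <;> simp [h] <;> ring

lemma scount_replicate_ne (k : ℕ) (x : α) (p : List α) (hp : ∃ z ∈ p, z ≠ x) :
    scount (replicate k x) p = 0 := by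
  induction k generalizing p with
  | zero =>
      obtain ⟨z, hz, -⟩ := hp
      exact scount_nil_word _ (by rintro rfl; simp at hz)
  | succ k ih =>
      obtain ⟨y, q, rfl⟩ := p.exists_cons_of_ne_nil
        (by obtain ⟨z, hz, -⟩ := hp; rintro rfl; simp at hz)
      rw [replicate_succ, scount_cons, ih _ hp]
      by_cases h : y = x
      · subst h
        rw [if_pos rfl]
        obtain ⟨z, hz, hzx⟩ := hp
        rcases mem_cons.1 hz with rfl | hz
        · exact absurd rfl hzx
        · rw [ih _ ⟨z, hz, hzx⟩]
      · rw [if_neg h]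

lemma scount_replicate_self (k : ℕ) (x : α) : scount (replicate k x) [x] = k := by
  induction k with
  | zero => rfl
  | succ k ih => rw [replicate_succ, scount_cons, ih, scount_nil, if_pos rfl]

end scountMachinery

lemma scB_b (k : ℕ) : scount (B k) [b] = k := scount_replicate_self k b
lemma scB_a (k : ℕ) : scount (B k) [a] = 0 :=
  scount_replicate_ne k b _ ⟨a, by simp, by simp⟩
lemma scB_c (k : ℕ) : scount (B k) [c] = 0 :=
  scount_replicate_ne k b _ ⟨c, by simp, by simp⟩
lemma scB_ab (k : ℕ) : scount (B k) [a, b] = 0 :=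
  scount_replicate_ne k b _ ⟨a, by simp, by simp⟩
lemma scB_bc (k : ℕ) : scount (B k) [b, c] = 0 :=
  scount_replicate_ne k b _ ⟨c, by simp, by simp⟩
lemma scB_abc (k : ℕ) : scount (B k) [a, b, c] = 0 :=
  scount_replicate_ne k b _ ⟨a, by simp, by simp⟩

lemma sc01 : scount [a] [a] = 1 := by decide
lemma sc02 : scount [a] [b] = 0 := by decide
lemma sc03 : scount [a] [c] = 0 := by decide
lemma sc04 : scount [a] [a,b] = 0 := by decide
lemma sc05 : scount [a] [b,c] = 0 := by decide
lemma sc06 : scount [a] [a,b,c] = 0 := by decide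
lemma sc07 : scount [c] [a] = 0 := by decide
lemma sc08 : scount [c] [b] = 0 := by decide
lemma sc09 : scount [c] [c] = 1 := by decide
lemma sc10 : scount [c] [a,b] = 0 := by decide
lemma sc11 : scount [c] [b,c] = 0 := by decide
lemma sc12 : scount [c] [a,b,c] = 0 := by decide

lemma sc_fmla (α β γ δ ν : ℕ) :
    scount (B α ++ [a] ++ B β ++ [c] ++ B γ ++ [a] ++ B δ ++ [c] ++ B ν) [b]
        = α + β + γ + δ + ν ∧
    scount (B α ++ [a] ++ B β ++ [c] ++ B γ ++ [a] ++ B δ ++ [c] ++ B ν) [a, b]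
        = β + γ + 2*δ + 2*ν ∧
    scount (B α ++ [a] ++ B β ++ [c] ++ B γ ++ [a] ++ B δ ++ [c] ++ B ν) [b, c]
        = 2*α + 2*β + γ + δ ∧
    scount (B α ++ [a] ++ B β ++ [c] ++ B γ ++ [a] ++ B δ ++ [c] ++ B ν) [a, b, c]
        = 2*β + γ + 2*δ := by
  refine ⟨?_, ?_, ?_, ?_⟩ <;>
  · simp only [append_assoc]
    simp only [scount_append1, scount_append2, scount_append3,
      scB_a, scB_b, scB_c, scB_ab, scB_bc, scB_abc,
      sc01, sc02, sc03, sc04, sc05, sc06, sc07, sc08, sc09, sc10, sc11, sc12]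
    ring

section dHMachinery
variable {α : Type*} [DecidableEq α]

lemma dH_cons (x y : α) (u v : List α) :
    dH (x :: u) (y :: v) = (if x = y then 0 else 1) + dH u v := by
  simp only [dH, zip_cons_cons, countP_cons]
  by_cases h : x = y <;> simp [h] <;> omega

lemma dH_self (l : List α) : dH l l = 0 := by
  induction l with
  | nil => rfl
  | cons x l ih => rw [dH_cons, ih, if_pos rfl]

lemma dH_rep (k : ℕ) (z : α) (u v : List α) :
    dH (replicate k z ++ u) (replicate k z ++ v) = dH u v := by
  induction k with
  | zero => rfl
  | succ k ih =>
      rw [replicate_succ, cons_append, cons_append, dH_cons, ih, if_pos rfl, Nat.zero_add]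

lemma dH_comm (u v : List α) : dH u v = dH v u := by
  rw [dH, dH, ← zip_swap, countP_map]
  apply countP_congr
  intro p _
  simp [Function.comp, ne_comm]

end dHMachinery

lemma B_add (m n : ℕ) : B (m + n) = B m ++ B n := List.replicate_add m n b

lemma caseA (α β' δ ν' s g : ℕ) :
    dH (B α ++ [a] ++ B (β' + 2*(s+1)) ++ [c] ++ B (g+1+s) ++ [a] ++ B δ ++ [c] ++ B (ν'+(s+1)))
       (B (α+(s+1)) ++ [a] ++ B β' ++ [c] ++ B (g+1+s) ++ [a] ++ B (δ+2*(s+1)) ++ [c] ++ B ν')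
      = 8 := by
  have e1 : B (β' + 2*(s+1)) = B s ++ B 1 ++ B β' ++ B 1 ++ B s := by
    rw [← B_add, ← B_add, ← B_add, ← B_add]; congr 1; ring
  have e2 : B (g+1+s) = B g ++ B 1 ++ B s := by
    rw [← B_add, ← B_add]
  have e2' : B (g+1+s) = B s ++ B 1 ++ B g := by
    rw [← B_add, ← B_add]; congr 1; ring
  have e3 : B (ν'+(s+1)) = B s ++ B 1 ++ B ν' := by
    rw [← B_add, ← B_add]; congr 1; ring
  have e4 : B (α+(s+1)) = B α ++ B 1 ++ B s := by
    rw [← B_add, ← B_add]; congr 1; ring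
  have e5 : B (δ+2*(s+1)) = B s ++ B 1 ++ B δ ++ B 1 ++ B s := by
    rw [← B_add, ← B_add, ← B_add, ← B_add]; congr 1; ring
  rw [e1, e3, e4, e5]
  nth_rewrite 2 [e2']
  rw [e2]
  simp only [append_assoc, show B 1 = [b] from rfl, singleton_append, cons_append,
    nil_append]
  simp only [dH_rep, dH_cons, dH_self]
  decide

lemma caseB (α β' δ ν' s : ℕ) :
    dH (B α ++ [a] ++ B (β' + 2*(s+1)) ++ [c] ++ B s ++ [a] ++ B δ ++ [c] ++ B (ν'+(s+1)))
       (B (α+(s+1)) ++ [a] ++ B β' ++ [c] ++ B s ++ [a] ++ B (δ+2*(s+1)) ++ [c] ++ B ν')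
      = 7 := by
  have e1 : B (β' + 2*(s+1)) = B s ++ B 1 ++ B β' ++ B 1 ++ B s := by
    rw [← B_add, ← B_add, ← B_add, ← B_add]; congr 1; ring
  have e3 : B (ν'+(s+1)) = B s ++ B 1 ++ B ν' := by
    rw [← B_add, ← B_add]; congr 1; ring
  have e4 : B (α+(s+1)) = B α ++ B 1 ++ B s := by
    rw [← B_add, ← B_add]; congr 1; ring
  have e5 : B (δ+2*(s+1)) = B s ++ B 1 ++ B δ ++ B 1 ++ B s := by
    rw [← B_add, ← B_add, ← B_add, ← B_add]; congr 1; ring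
  rw [e1, e3, e4, e5]
  simp only [append_assoc, show B 1 = [b] from rfl, singleton_append, cons_append,
    nil_append]
  simp only [dH_rep, dH_cons, dH_self]
  decide

lemma caseC (α β' γ δ ν' r : ℕ) :
    dH (B α ++ [a] ++ B (β' + 2*(γ+2+r)) ++ [c] ++ B γ ++ [a] ++ B δ ++ [c] ++ B (ν'+(γ+2+r)))
       (B (α+(γ+2+r)) ++ [a] ++ B β' ++ [c] ++ B γ ++ [a] ++ B (δ+2*(γ+2+r)) ++ [c] ++ B ν')
      = 8 := by
  have e1 : B (β' + 2*(γ+2+r)) = B (γ+1+r) ++ B 1 ++ B β' ++ B 1 ++ B γ ++ B 1 ++ B r := by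
    rw [← B_add, ← B_add, ← B_add, ← B_add, ← B_add, ← B_add]; congr 1; ring
  have e3 : B (ν'+(γ+2+r)) = B (γ+1+r) ++ B 1 ++ B ν' := by
    rw [← B_add, ← B_add]; congr 1; ring
  have e4 : B (α+(γ+2+r)) = B α ++ B 1 ++ B (γ+1+r) := by
    rw [← B_add, ← B_add]; congr 1; ring
  have e5 : B (δ+2*(γ+2+r)) = B r ++ B 1 ++ B γ ++ B 1 ++ B δ ++ B 1 ++ B (γ+1+r) := by
    rw [← B_add, ← B_add, ← B_add, ← B_add, ← B_add, ← B_add]; congr 1; ring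
  rw [e1, e3, e4, e5]
  simp only [append_assoc, show B 1 = [b] from rfl, singleton_append, cons_append,
    nil_append]
  simp only [dH_rep, dH_cons, dH_self]
  decide

theorem stmt_16 (α β γ δ ν α' β' γ' δ' ν' : ℕ)
    (hβ : 1 ≤ β) (hγ : 1 ≤ γ) (hδ : 1 ≤ δ)
    (hβ' : 1 ≤ β') (hγ' : 1 ≤ γ') (hδ' : 1 ≤ δ')
    (hne : (B α ++ [a] ++ B β ++ [c] ++ B γ ++ [a] ++ B δ ++ [c] ++ B ν) ≠
      (B α' ++ [a] ++ B β' ++ [c] ++ B γ' ++ [a] ++ B δ' ++ [c] ++ B ν'))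
    (hM : MEq3 (B α ++ [a] ++ B β ++ [c] ++ B γ ++ [a] ++ B δ ++ [c] ++ B ν)
      (B α' ++ [a] ++ B β' ++ [c] ++ B γ' ++ [a] ++ B δ' ++ [c] ++ B ν')) :
    γ = γ' ∧ α + ν = α' + ν' ∧
      (β' : ℤ) - (β : ℤ) = (δ : ℤ) - (δ' : ℤ) ∧
      (α' : ℤ) - (α : ℤ) = (ν : ℤ) - (ν' : ℤ) ∧
      (dH (B α ++ [a] ++ B β ++ [c] ++ B γ ++ [a] ++ B δ ++ [c] ++ B ν)
          (B α' ++ [a] ++ B β' ++ [c] ++ B γ' ++ [a] ++ B δ' ++ [c] ++ B ν') = 7 ∨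
       dH (B α ++ [a] ++ B β ++ [c] ++ B γ ++ [a] ++ B δ ++ [c] ++ B ν)
          (B α' ++ [a] ++ B β' ++ [c] ++ B γ' ++ [a] ++ B δ' ++ [c] ++ B ν') = 8) := by
  obtain ⟨-, h2, -, h4, h5, h6⟩ := hM
  obtain ⟨F1, F2, F3, F4⟩ := sc_fmla α β γ δ ν
  obtain ⟨G1, G2, G3, G4⟩ := sc_fmla α' β' γ' δ' ν'
  rw [F1, G1] at h2
  rw [F2, G2] at h4
  rw [F3, G3] at h5
  rw [F4, G4] at h6
  refine ⟨by omega, by omega, by omega, by omega, ?_⟩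
  rcases Nat.lt_trichotomy α α' with hlt | heq | hgt
  · -- α < α'
    obtain ⟨s, hs⟩ : ∃ s, α' = α + (s + 1) := ⟨α' - α - 1, by omega⟩
    have hβe : β = β' + 2*(s+1) := by omega
    have hδe : δ' = δ + 2*(s+1) := by omega
    have hνe : ν = ν' + (s+1) := by omega
    have hγe : γ' = γ := by omega
    subst hs hβe hδe hνe hγe
    rcases Nat.lt_trichotomy s γ' with h | h | h
    · obtain ⟨g, hg⟩ : ∃ g, γ' = g + 1 + s := ⟨γ' - s - 1, by omega⟩
      subst hg
      exact Or.inr (caseA α β' δ ν' s g)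
    · have hgs : γ' = s := by omega
      subst hgs
      exact Or.inl (caseB α β' δ ν' γ')
    · obtain ⟨r, hr⟩ : ∃ r, s + 1 = γ' + 2 + r := ⟨s - γ' - 1, by omega⟩
      rw [hr]
      exact Or.inr (caseC α β' γ' δ ν' r)
  · -- α = α'
    subst heq
    have hβe : β = β' := by omega
    have hγe : γ = γ' := by omega
    have hδe : δ = δ' := by omega
    have hνe : ν = ν' := by omega
    subst hβe hγe hδe hνe
    exact absurd rfl hne
  · -- α' < α
    rw [dH_comm]
    obtain ⟨s, hs⟩ : ∃ s, α = α' + (s + 1) := ⟨α - α' - 1, by omega⟩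
    have hβe : β' = β + 2*(s+1) := by omega
    have hδe : δ = δ' + 2*(s+1) := by omega
    have hνe : ν' = ν + (s+1) := by omega
    have hγe : γ = γ' := by omega
    subst hs hβe hδe hνe hγe
    rcases Nat.lt_trichotomy s γ with h | h | h
    · obtain ⟨g, hg⟩ : ∃ g, γ = g + 1 + s := ⟨γ - s - 1, by omega⟩
      subst hg
      exact Or.inr (caseA α' β δ' ν s g)
    · have hgs : γ = s := by omega
      subst hgs
      exact Or.inl (caseB α' β δ' ν γ)
    · obtain ⟨r, hr⟩ : ∃ r, s + 1 = γ + 2 + r := ⟨s - γ - 1, by omega⟩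
      rw [hr]
      exact Or.inr (caseC α' β γ δ' ν r)
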